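/- Let R(t) be a monic polynomial with integer coefficients, let S(t) be a polynomial with integer coefficients, and for each integer n ≥ 1 set Q_n(t) = t^n R(t) + S(t). Let θ be a complex root of R with |θ| > 1, of multiplicity m, and let δ > 0 be small enough that the closed disk of radius δ centered at θ lies strictly outside the closed unit disk and contains no root of R other than θ. Then there exists an integer N such that for every n ≥ N, the number of complex roots of Q_n, counted with multiplicity, lying in the open disk of radius δ centered at θ is exactly m. -/

import Mathlib

open Polynomial Metric Real Complex Filter

set_option maxHeartbeats 1000000

lemma eval_derivative_multiset_prod (M : Multiset ℂ) (w : ℂ) (hw : ∀ z ∈ M, w ≠ z) :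
    Polynomial.eval w (Polynomial.derivative (M.map (fun z => X - C z)).prod) =
      Polynomial.eval w (M.map (fun z => X - C z)).prod * (M.map (fun z => (w - z)⁻¹)).sum := by
  induction M using Multiset.induction_on with
  | empty => simp
  | cons a M ih =>
    have ha : w - a ≠ 0 := sub_ne_zero.2 (hw a (Multiset.mem_cons_self a M))
    have ih' := ih (fun z hz => hw z (Multiset.mem_cons_of_mem hz))
    simp only [Multiset.map_cons, Multiset.prod_cons, Multiset.sum_cons,
      Polynomial.derivative_mul, Polynomial.eval_add, Polynomial.eval_mul,
      Polynomial.derivative_sub, Polynomial.derivative_X, Polynomial.derivative_C,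
      Polynomial.eval_sub, Polynomial.eval_X, Polynomial.eval_C, Polynomial.eval_one, sub_zero,
      Polynomial.eval_one, one_mul, ih']
    field_simp

lemma my_circleIntegral_add {f g : ℂ → ℂ} {c : ℂ} {R : ℝ} (hf : CircleIntegrable f c R)
    (hg : CircleIntegrable g c R) :
    (∮ z in C(c, R), (f z + g z)) = (∮ z in C(c, R), f z) + ∮ z in C(c, R), g z := by
  simp only [circleIntegral, smul_add, intervalIntegral.integral_add hf.out hg.out]

lemma circleIntegrable_multiset_sum (M : Multiset ℂ) (c : ℂ) {δ : ℝ} (hδ : 0 < δ)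
    (h : ∀ z ∈ M, ‖z - c‖ ≠ δ) :
    CircleIntegrable (fun w => (M.map (fun z => (w - z)⁻¹)).sum) c δ := by
  induction M using Multiset.induction_on with
  | empty => simpa using circleIntegrable_const (0:ℂ) c δ
  | cons a M ih =>
    have h1 : CircleIntegrable (fun w => (w - a)⁻¹) c δ := by
      rw [circleIntegrable_sub_inv_iff]
      right
      intro hs
      rw [mem_sphere_iff_norm, abs_of_pos hδ] at hs
      exact h a (Multiset.mem_cons_self a M) hs
    have h2 := ih (fun z hz => h z (Multiset.mem_cons_of_mem hz))
    have := h1.add h2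
    simpa [Pi.add_def] using this

lemma integral_multiset_sum (M : Multiset ℂ) (c : ℂ) {δ : ℝ} (hδ : 0 < δ)
    (h : ∀ z ∈ M, ‖z - c‖ ≠ δ) :
    (∮ w in C(c, δ), (M.map (fun z => (w - z)⁻¹)).sum) =
      2 * π * I * ((M.filter (fun z => ‖z - c‖ < δ)).card : ℂ) := by
  induction M using Multiset.induction_on with
  | empty => simp [circleIntegral]
  | cons a M ih =>
    have h1 : CircleIntegrable (fun w => (w - a)⁻¹) c δ := by
      rw [circleIntegrable_sub_inv_iff]; right
      intro hs
      rw [mem_sphere_iff_norm, abs_of_pos hδ] at hs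
      exact h a (Multiset.mem_cons_self a M) hs
    have h2 := circleIntegrable_multiset_sum M c hδ (fun z hz => h z (Multiset.mem_cons_of_mem hz))
    have ih' := ih (fun z hz => h z (Multiset.mem_cons_of_mem hz))
    have hsplit : (∮ w in C(c, δ), ((a ::ₘ M).map (fun z => (w - z)⁻¹)).sum)
        = (∮ w in C(c, δ), ((w - a)⁻¹ + (M.map (fun z => (w - z)⁻¹)).sum)) := by
      apply circleIntegral.integral_congr hδ.le
      intro w _
      simp
    rw [hsplit, my_circleIntegral_add h1 h2, ih']
    rcases lt_or_gt_of_ne (h a (Multiset.mem_cons_self a M)) with hin | hout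
    · rw [circleIntegral.integral_sub_inv_of_mem_ball (by rwa [mem_ball, Complex.dist_eq])]
      rw [Multiset.filter_cons_of_pos _ (by simpa using hin)]
      push_cast [Multiset.card_cons]
      ring
    · have hz0 : (∮ w in C(c, δ), (w - a)⁻¹) = 0 := by
        apply Complex.circleIntegral_eq_zero_of_differentiable_on_off_countable hδ.le
          Set.countable_empty
        · intro z hz
          have : z ≠ a := by
            intro hza; subst hza
            rw [Metric.mem_closedBall, Complex.dist_eq] at hz
            exact absurd (lt_of_le_of_lt hz hout) (lt_irrefl _)
          exact ContinuousAt.continuousWithinAt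
            (((continuous_id.sub continuous_const).continuousAt).inv₀ (sub_ne_zero.2 this))
        · intro z hz
          simp only [Set.diff_empty, Metric.mem_ball, Complex.dist_eq] at hz
          have : z ≠ a := fun hza => by subst hza; exact absurd (hz.trans hout) (lt_irrefl _)
          exact ((differentiable_id.sub_const a) z).inv (sub_ne_zero.2 this)
      rw [hz0, Multiset.filter_cons_of_neg _ (by simpa using not_lt.2 hout.le)]
      ring

lemma logdiff_identity (F F' s s' : ℂ) (hF : F ≠ 0) (hG : F + s ≠ 0) :
    (F' + s') / (F + s) - F' / F = s' / (F + s) - s / (F + s) * (F' / F) := by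
  field_simp
  ring


lemma count_roots_eq (P : ℂ[X]) (hP : P.Monic) (c : ℂ) {δ : ℝ} (hδ : 0 < δ)
    (h : ∀ z ∈ P.roots, ‖z - c‖ ≠ δ) :
    (∮ w in C(c, δ), Polynomial.eval w (Polynomial.derivative P) / Polynomial.eval w P)
      = 2 * π * I * (((P.roots.filter fun z => ‖z - c‖ < δ)).card : ℂ) := by
  have hfac := (IsAlgClosed.splits P).eq_prod_roots_of_monic hP
  rw [circleIntegral.integral_congr hδ.le
    (g := fun w => (P.roots.map (fun z => (w - z)⁻¹)).sum) ?_]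
  · exact integral_multiset_sum _ _ hδ h
  · intro w hw
    rw [mem_sphere_iff_norm] at hw
    have hwr : ∀ z ∈ P.roots, w ≠ z := by
      intro z hz hwz
      subst hwz
      exact h w hz hw
    have hne : Polynomial.eval w P ≠ 0 := by
      intro h0
      exact hwr w ((Polynomial.mem_roots hP.ne_zero).2 h0) rfl
    have hkey := eval_derivative_multiset_prod P.roots w hwr
    rw [← hfac] at hkey
    simp only [hkey]
    field_simp

lemma roots_count_key (R S : Polynomial ℤ) (hR : R.Monic) (θ : ℂ) (m : ℕ) (δ : ℝ) (hδ : 0 < δ)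
    (Rc Sc : ℂ[X]) (hRc_def : Rc = R.map (Int.castRingHom ℂ))
    (hSc_def : Sc = S.map (Int.castRingHom ℂ)) (hRc : Rc.Monic)
    (haev : ∀ z : ℂ, Polynomial.aeval z R = Polynomial.eval z Rc)
    (honly : ∀ z : ℂ, Polynomial.aeval z R = 0 → ‖z - θ‖ ≤ δ → z = θ)
    (houtside : ∀ z : ℂ, ‖z - θ‖ ≤ δ → 1 < ‖z‖)
    (hm : Polynomial.rootMultiplicity θ Rc = m)
    (ρ η A A' B : ℝ) (hρ : 1 < ρ) (hη : 0 < η) (hA0 : 0 ≤ A) (hA'0 : 0 ≤ A') (hB0 : 0 ≤ B)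
    (hρ_le : ∀ z ∈ sphere θ δ, ρ ≤ ‖z‖)
    (hη_le : ∀ z ∈ sphere θ δ, η ≤ ‖Polynomial.eval z Rc‖)
    (hA_le : ∀ z ∈ sphere θ δ, ‖Polynomial.eval z Sc‖ ≤ A)
    (hA'_le : ∀ z ∈ sphere θ δ, ‖Polynomial.eval z (Polynomial.derivative Sc)‖ ≤ A')
    (hB_le : ∀ z ∈ sphere θ δ, ‖Polynomial.eval z (Polynomial.derivative Rc)‖ ≤ B)
    (n : ℕ) (hn1 : S.natDegree < n) (hn2 : 2 * A ≤ ρ ^ n * η)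
    (hn3 : 2 * δ * (A' + A * ((n : ℝ) + B / η)) < ρ ^ n * η) :
    (((X ^ n * R + S).map (Int.castRingHom ℂ)).roots.filter
        (fun z => ‖z - θ‖ < δ)).card = m := by
  have hρ0 : (0:ℝ) < ρ := lt_trans one_pos hρ
  have hpow : (0:ℝ) < ρ ^ n := pow_pos hρ0 n
  set f : ℂ[X] := X ^ n * Rc with hf_def
  set g : ℂ[X] := (X ^ n * R + S).map (Int.castRingHom ℂ) with hg_def
  have hg_eq : g = f + Sc := by
    rw [hg_def, Polynomial.map_add, Polynomial.map_mul, Polynomial.map_pow, Polynomial.map_X,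
      hf_def, hRc_def, hSc_def]
  have hf_monic : f.Monic := (monic_X_pow n).mul hRc
  have hf_deg : f.natDegree = n + Rc.natDegree := by
    rw [hf_def, (monic_X_pow n).natDegree_mul hRc, natDegree_X_pow]
  have hg_monic : g.Monic := by
    rw [hg_eq]
    apply hf_monic.add_of_left
    calc Sc.degree ≤ S.degree := by rw [hSc_def]; exact Polynomial.degree_map_le
      _ ≤ (S.natDegree : WithBot ℕ) := Polynomial.degree_le_natDegree
      _ < (n : WithBot ℕ) := by exact_mod_cast hn1
      _ ≤ (f.natDegree : WithBot ℕ) := by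
            rw [hf_deg]; exact_mod_cast Nat.le_add_right n Rc.natDegree
      _ = f.degree := (Polynomial.degree_eq_natDegree hf_monic.ne_zero).symm
  -- sphere facts
  have hfval : ∀ z : ℂ, Polynomial.eval z f = z ^ n * Polynomial.eval z Rc := by
    intro z; rw [hf_def, Polynomial.eval_mul, Polynomial.eval_pow, Polynomial.eval_X]
  have hf_lb : ∀ z ∈ sphere θ δ, ρ ^ n * η ≤ ‖Polynomial.eval z f‖ := by
    intro z hz
    rw [hfval, norm_mul, norm_pow]
    have h1 : ρ ≤ ‖z‖ := hρ_le z hz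
    exact mul_le_mul (pow_le_pow_left₀ hρ0.le h1 n) (hη_le z hz) hη.le (by positivity)
  have hg_lb : ∀ z ∈ sphere θ δ, ρ ^ n * η / 2 ≤ ‖Polynomial.eval z g‖ := by
    intro z hz
    have h1 := hf_lb z hz
    have h2 := hA_le z hz
    have h3 : ‖Polynomial.eval z f‖ - ‖Polynomial.eval z Sc‖
        ≤ ‖Polynomial.eval z g‖ := by
      rw [hg_eq, Polynomial.eval_add]
      have h4 := norm_add_le (Polynomial.eval z f + Polynomial.eval z Sc)
        (-(Polynomial.eval z Sc))
      simp only [add_neg_cancel_right, norm_neg] at h4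
      linarith
    linarith
  have hf_ne : ∀ z ∈ sphere θ δ, Polynomial.eval z f ≠ 0 := by
    intro z hz h0
    have := hf_lb z hz
    rw [h0, norm_zero] at this
    nlinarith
  have hg_ne : ∀ z ∈ sphere θ δ, Polynomial.eval z g ≠ 0 := by
    intro z hz h0
    have := hg_lb z hz
    rw [h0, norm_zero] at this
    nlinarith
  -- roots off the sphere
  have hf_roots : ∀ z ∈ f.roots, ‖z - θ‖ ≠ δ := by
    intro z hz hzd
    exact hf_ne z (by rwa [mem_sphere_iff_norm]) ((Polynomial.mem_roots hf_monic.ne_zero).1 hz)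
  have hg_roots : ∀ z ∈ g.roots, ‖z - θ‖ ≠ δ := by
    intro z hz hzd
    exact hg_ne z (by rwa [mem_sphere_iff_norm]) ((Polynomial.mem_roots hg_monic.ne_zero).1 hz)
  -- count of roots of f in the ball is m
  have hcard_f : ((f.roots.filter fun z => ‖z - θ‖ < δ)).card = m := by
    have hroots_f : f.roots = n • ({0} : Multiset ℂ) + Rc.roots := by
      rw [hf_def, Polynomial.roots_mul (mul_ne_zero (pow_ne_zero n Polynomial.X_ne_zero)
        hRc.ne_zero), Polynomial.roots_pow, Polynomial.roots_X]
    rw [hroots_f, Multiset.filter_add, Multiset.card_add]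
    have h0 : Multiset.filter (fun z => ‖z - θ‖ < δ) (n • ({0} : Multiset ℂ)) = 0 := by
      rw [Multiset.filter_eq_nil]
      intro a ha
      have ha0 : a = 0 := by
        rcases Multiset.mem_nsmul.1 ha with ⟨-, h⟩
        simpa using h
      subst ha0
      simp only [zero_sub, norm_neg]
      intro hlt
      have h5 := houtside 0 (by simpa using hlt.le)
      simp only [norm_zero] at h5
      norm_num at h5
    have h1 : Multiset.filter (fun z => ‖z - θ‖ < δ) Rc.roots
        = Multiset.filter (fun z => z = θ) Rc.roots := by
      apply Multiset.filter_congr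
      intro z hz
      constructor
      · intro hlt
        exact honly z (by rw [haev]; exact (Polynomial.mem_roots hRc.ne_zero).1 hz) hlt.le
      · rintro rfl; simpa using hδ
    rw [h0, h1, Multiset.filter_eq', Multiset.card_replicate, Polynomial.count_roots, hm]
    simp
  -- the two integrals
  have hIf := count_roots_eq f hf_monic θ hδ hf_roots
  have hIg := count_roots_eq g hg_monic θ hδ hg_roots
  -- pointwise estimate on the sphere
  have hεpos : (0:ℝ) < ρ ^ n * η / 2 := by positivity
  have hpt : ∀ z ∈ sphere θ δ,
      ‖Polynomial.eval z (Polynomial.derivative g) / Polynomial.eval z g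
        - Polynomial.eval z (Polynomial.derivative f) / Polynomial.eval z f‖
        ≤ (A' + A * ((n:ℝ) + B / η)) / (ρ ^ n * η / 2) := by
    intro z hz
    have hF : Polynomial.eval z f ≠ 0 := hf_ne z hz
    have hG : Polynomial.eval z g ≠ 0 := hg_ne z hz
    have hFpos : 0 < ‖Polynomial.eval z f‖ :=
      lt_of_lt_of_le (by positivity) (hf_lb z hz)
    have hGlb := hg_lb z hz
    have hG' : Polynomial.eval z (Polynomial.derivative g)
        = Polynomial.eval z (Polynomial.derivative f)
          + Polynomial.eval z (Polynomial.derivative Sc) := by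
      rw [hg_eq, Polynomial.derivative_add, Polynomial.eval_add]
    have hGv : Polynomial.eval z g = Polynomial.eval z f + Polynomial.eval z Sc := by
      rw [hg_eq, Polynomial.eval_add]
    have hG2 : Polynomial.eval z f + Polynomial.eval z Sc ≠ 0 := by rw [← hGv]; exact hG
    have hid : Polynomial.eval z (Polynomial.derivative g) / Polynomial.eval z g
        - Polynomial.eval z (Polynomial.derivative f) / Polynomial.eval z f
        = Polynomial.eval z (Polynomial.derivative Sc) / Polynomial.eval z g
          - (Polynomial.eval z Sc / Polynomial.eval z g)
            * (Polynomial.eval z (Polynomial.derivative f) / Polynomial.eval z f) := by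
      rw [hG', hGv]
      exact logdiff_identity _ _ _ _ hF hG2
    -- ratio bound for f
    have hratio : ‖Polynomial.eval z (Polynomial.derivative f)
        / Polynomial.eval z f‖ ≤ (n:ℝ) + B / η := by
      have hdf : Polynomial.derivative f
          = Polynomial.C (n:ℂ) * X ^ (n - 1) * Rc + X ^ n * Polynomial.derivative Rc := by
        rw [hf_def, Polynomial.derivative_mul, Polynomial.derivative_X_pow]
      have habsz : 1 ≤ ‖z‖ := le_trans hρ.le (hρ_le z hz)
      have habsF : ‖Polynomial.eval z f‖
          = ‖z‖ ^ n * ‖Polynomial.eval z Rc‖ := by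
        rw [hfval, norm_mul, norm_pow]
      have hF'le : ‖Polynomial.eval z (Polynomial.derivative f)‖
          ≤ (n:ℝ) * ‖z‖ ^ n * ‖Polynomial.eval z Rc‖
            + ‖z‖ ^ n * B := by
        rw [hdf]
        simp only [Polynomial.eval_add, Polynomial.eval_mul, Polynomial.eval_pow,
          Polynomial.eval_X, Polynomial.eval_C]
        calc ‖(n:ℂ) * z ^ (n-1) * Polynomial.eval z Rc
              + z ^ n * Polynomial.eval z (Polynomial.derivative Rc)‖
            ≤ ‖(n:ℂ) * z ^ (n-1) * Polynomial.eval z Rc‖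
              + ‖z ^ n * Polynomial.eval z (Polynomial.derivative Rc)‖ :=
              norm_add_le _ _
          _ ≤ (n:ℝ) * ‖z‖ ^ n * ‖Polynomial.eval z Rc‖
              + ‖z‖ ^ n * B := by
              rw [norm_mul, norm_mul, norm_mul, norm_pow, norm_pow]
              have e1 : ‖(n:ℂ)‖ = (n:ℝ) := by
                rw [Complex.norm_natCast]
              rw [e1]
              apply add_le_add
              · apply mul_le_mul_of_nonneg_right _ (norm_nonneg _)
                exact mul_le_mul_of_nonneg_left
                  (pow_le_pow_right₀ habsz (Nat.sub_le n 1)) (Nat.cast_nonneg n)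
              · exact mul_le_mul_of_nonneg_left (hB_le z hz) (by positivity)
      have hkey : ‖Polynomial.eval z (Polynomial.derivative f)‖
          ≤ ((n:ℝ) + B / η) * ‖Polynomial.eval z f‖ := by
        rw [habsF]
        have h2 : ‖z‖ ^ n * B ≤ B / η * (‖z‖ ^ n
            * ‖Polynomial.eval z Rc‖) := by
          have := hη_le z hz
          rw [div_mul_eq_mul_div, le_div_iff₀ hη]
          have hz0 : (0:ℝ) ≤ ‖z‖ ^ n := by positivity
          calc ‖z‖ ^ n * B * η = B * η * ‖z‖ ^ n := by ring
            _ ≤ B * ‖Polynomial.eval z Rc‖ * ‖z‖ ^ n := by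
                gcongr
            _ = B * (‖z‖ ^ n * ‖Polynomial.eval z Rc‖) := by ring
        calc ‖Polynomial.eval z (Polynomial.derivative f)‖
            ≤ (n:ℝ) * ‖z‖ ^ n * ‖Polynomial.eval z Rc‖
              + ‖z‖ ^ n * B := hF'le
          _ ≤ (n:ℝ) * (‖z‖ ^ n * ‖Polynomial.eval z Rc‖)
              + B / η * (‖z‖ ^ n * ‖Polynomial.eval z Rc‖) := by
              rw [← mul_assoc]
              gcongr
          _ = ((n:ℝ) + B / η) * (‖z‖ ^ n * ‖Polynomial.eval z Rc‖) := by
              ring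
      rw [norm_div, div_le_iff₀ hFpos]
      exact hkey
    rw [hid]
    have hb1 : ‖Polynomial.eval z (Polynomial.derivative Sc)
        / Polynomial.eval z g‖ ≤ A' / (ρ ^ n * η / 2) := by
      rw [norm_div]
      exact div_le_div₀ hA'0 (hA'_le z hz) hεpos hGlb
    have hb2 : ‖(Polynomial.eval z Sc / Polynomial.eval z g)
        * (Polynomial.eval z (Polynomial.derivative f) / Polynomial.eval z f)‖
        ≤ A / (ρ ^ n * η / 2) * ((n:ℝ) + B / η) := by
      rw [norm_mul]
      apply mul_le_mul _ hratio (norm_nonneg _) (by positivity)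
      rw [norm_div]
      exact div_le_div₀ hA0 (hA_le z hz) hεpos hGlb
    calc ‖Polynomial.eval z (Polynomial.derivative Sc) / Polynomial.eval z g
          - Polynomial.eval z Sc / Polynomial.eval z g
            * (Polynomial.eval z (Polynomial.derivative f) / Polynomial.eval z f)‖
        ≤ ‖Polynomial.eval z (Polynomial.derivative Sc) / Polynomial.eval z g‖
          + ‖Polynomial.eval z Sc / Polynomial.eval z g
            * (Polynomial.eval z (Polynomial.derivative f) / Polynomial.eval z f)‖ := by
          exact norm_sub_le _ _
      _ ≤ A' / (ρ ^ n * η / 2) + A / (ρ ^ n * η / 2) * ((n:ℝ) + B / η) := by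
          exact add_le_add hb1 hb2
      _ = (A' + A * ((n:ℝ) + B / η)) / (ρ ^ n * η / 2) := by ring
  -- integrability
  have hf_int : CircleIntegrable (fun w => Polynomial.eval w (Polynomial.derivative f)
      / Polynomial.eval w f) θ δ :=
    (((Polynomial.derivative f).continuous.continuousOn).div
      (f.continuous.continuousOn) hf_ne).circleIntegrable hδ.le
  have hg_int : CircleIntegrable (fun w => Polynomial.eval w (Polynomial.derivative g)
      / Polynomial.eval w g) θ δ :=
    (((Polynomial.derivative g).continuous.continuousOn).div
      (g.continuous.continuousOn) hg_ne).circleIntegrable hδ.le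
  -- norm estimate
  have hnorm : ‖(∮ w in C(θ, δ), (Polynomial.eval w (Polynomial.derivative g)
        / Polynomial.eval w g - Polynomial.eval w (Polynomial.derivative f)
        / Polynomial.eval w f))‖
      ≤ 2 * π * δ * ((A' + A * ((n:ℝ) + B / η)) / (ρ ^ n * η / 2)) := by
    have := circleIntegral.norm_integral_le_of_norm_le_const (c := θ) (R := δ)
      (f := fun w => Polynomial.eval w (Polynomial.derivative g) / Polynomial.eval w g
        - Polynomial.eval w (Polynomial.derivative f) / Polynomial.eval w f)
      (C := (A' + A * ((n:ℝ) + B / η)) / (ρ ^ n * η / 2)) hδ.le ?_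
    · simpa using this
    · intro z hz
      exact hpt z hz
  rw [circleIntegral.integral_sub hg_int hf_int, hIg, hIf] at hnorm
  -- conclude
  set a := ((g.roots.filter fun z => ‖z - θ‖ < δ)).card with ha_def
  set b := ((f.roots.filter fun z => ‖z - θ‖ < δ)).card with hb_def
  have hfactor : 2 * ↑π * I * (a:ℂ) - 2 * ↑π * I * (b:ℂ) = 2 * ↑π * I * ((a:ℂ) - (b:ℂ)) := by
    ring
  rw [hfactor] at hnorm
  have habsc : ‖(2 * ↑π * I * ((a:ℂ) - (b:ℂ)))‖ = 2 * π * ‖((a:ℂ) - (b:ℂ))‖ := by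
    rw [norm_mul, norm_mul, norm_mul, Complex.norm_I, Complex.norm_real, Real.norm_eq_abs,
      abs_of_pos Real.pi_pos]
    simp
  rw [habsc] at hnorm
  have hπ : (0:ℝ) < 2 * π := by positivity
  have hsmall : ‖((a:ℂ) - (b:ℂ))‖ < 1 := by
    have hle : ‖((a:ℂ) - (b:ℂ))‖ ≤ δ * ((A' + A * ((n:ℝ) + B / η)) / (ρ ^ n * η / 2)) := by
      nlinarith [hnorm, Real.pi_pos]
    have hlt : δ * ((A' + A * ((n:ℝ) + B / η)) / (ρ ^ n * η / 2)) < 1 := by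
      have heq : δ * ((A' + A * ((n:ℝ) + B / η)) / (ρ ^ n * η / 2))
          = 2 * δ * (A' + A * ((n:ℝ) + B / η)) / (ρ ^ n * η) := by
        field_simp
      rw [heq, div_lt_one (by positivity)]
      exact hn3
    linarith
  have hab : a = b := by
    have hcast : ((a:ℂ) - (b:ℂ)) = (((a:ℝ) - (b:ℝ) : ℝ) : ℂ) := by push_cast; ring
    rw [hcast, Complex.norm_real, Real.norm_eq_abs] at hsmall
    by_contra hne
    have hZ : ((a:ℤ)) ≠ ((b:ℤ)) := by exact_mod_cast hne
    have h1 := Int.one_le_abs (sub_ne_zero.2 hZ)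
    have h2 : (1:ℝ) ≤ |(a:ℝ) - (b:ℝ)| := by exact_mod_cast h1
    linarith
  rw [hab]
  exact hcard_f


/-- Lemma 2.5: let `θ` be a root of the monic integer polynomial `R` with `|θ| > 1`,
of multiplicity `m`, and let `δ > 0` be small enough that the closed disk of radius `δ`
about `θ` lies strictly outside the closed unit disk and contains no other root of `R`.
Then for all sufficiently large `n`, the polynomial `Q_n = t^n R + S` has exactly `m`
roots (with multiplicity) in the open disk of radius `δ` about `θ`. -/
theorem roots_in_disk_eventually (R S : Polynomial ℤ) (hR : R.Monic)
    (θ : ℂ) (hθroot : Polynomial.aeval θ R = 0) (hθabs : 1 < ‖θ‖)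
    (m : ℕ) (hm : ((R.map (Int.castRingHom ℂ)).rootMultiplicity θ) = m)
    (δ : ℝ) (hδ : 0 < δ)
    (houtside : ∀ z : ℂ, ‖z - θ‖ ≤ δ → 1 < ‖z‖)
    (honly : ∀ z : ℂ, Polynomial.aeval z R = 0 → ‖z - θ‖ ≤ δ → z = θ) :
    ∃ N : ℕ, ∀ n : ℕ, N ≤ n →
      (((X ^ n * R + S).map (Int.castRingHom ℂ)).roots.filter
        (fun z => ‖z - θ‖ < δ)).card = m := by
  set Rc := R.map (Int.castRingHom ℂ) with hRc_def
  set Sc := S.map (Int.castRingHom ℂ) with hSc_def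
  have hRc : Rc.Monic := hR.map _
  have haev : ∀ z : ℂ, Polynomial.aeval z R = Polynomial.eval z Rc := by
    intro z
    rw [Polynomial.aeval_def, hRc_def, Polynomial.eval_map, algebraMap_int_eq]
  -- sphere compact nonempty
  have hKc : IsCompact (sphere θ δ) := isCompact_sphere θ δ
  have hKne : (sphere θ δ).Nonempty := (NormedSpace.sphere_nonempty).2 hδ.le
  have habs : ∀ z ∈ sphere θ δ, ‖z - θ‖ = δ := by
    intro z hz
    rwa [mem_sphere_iff_norm] at hz
  -- constants
  obtain ⟨z₁, hz₁K, hz₁⟩ := hKc.exists_isMinOn hKne (continuous_norm.continuousOn)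
  set ρ := ‖z₁‖ with hρ_def
  have hρ : 1 < ρ := houtside z₁ (le_of_eq (habs z₁ hz₁K))
  have hρ_le : ∀ z ∈ sphere θ δ, ρ ≤ ‖z‖ := fun z hz => hz₁ hz
  obtain ⟨z₂, hz₂K, hz₂⟩ := hKc.exists_isMinOn hKne
    ((continuous_norm.comp (Rc.continuous)).continuousOn)
  set η := ‖Polynomial.eval z₂ Rc‖ with hη_def
  have hη : 0 < η := by
    rw [hη_def]
    apply norm_pos_iff.mpr
    intro h0
    have : z₂ = θ := honly z₂ (by rw [haev]; exact h0) (le_of_eq (habs z₂ hz₂K))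
    rw [this] at hz₂K
    rw [mem_sphere_iff_norm, sub_self] at hz₂K
    simp at hz₂K
    exact absurd hz₂K.symm hδ.ne'
  have hη_le : ∀ z ∈ sphere θ δ, η ≤ ‖Polynomial.eval z Rc‖ := fun z hz => hz₂ hz
  obtain ⟨z₃, hz₃K, hz₃⟩ := hKc.exists_isMaxOn hKne
    ((continuous_norm.comp (Sc.continuous)).continuousOn)
  set A := ‖Polynomial.eval z₃ Sc‖ with hA_def
  have hA_le : ∀ z ∈ sphere θ δ, ‖Polynomial.eval z Sc‖ ≤ A := fun z hz => hz₃ hz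
  have hA0 : 0 ≤ A := norm_nonneg _
  obtain ⟨z₄, hz₄K, hz₄⟩ := hKc.exists_isMaxOn hKne
    ((continuous_norm.comp ((Polynomial.derivative Sc).continuous)).continuousOn)
  set A' := ‖Polynomial.eval z₄ (Polynomial.derivative Sc)‖ with hA'_def
  have hA'_le : ∀ z ∈ sphere θ δ,
      ‖Polynomial.eval z (Polynomial.derivative Sc)‖ ≤ A' := fun z hz => hz₄ hz
  have hA'0 : 0 ≤ A' := norm_nonneg _
  obtain ⟨z₅, hz₅K, hz₅⟩ := hKc.exists_isMaxOn hKne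
    ((continuous_norm.comp ((Polynomial.derivative Rc).continuous)).continuousOn)
  set B := ‖Polynomial.eval z₅ (Polynomial.derivative Rc)‖ with hB_def
  have hB_le : ∀ z ∈ sphere θ δ,
      ‖Polynomial.eval z (Polynomial.derivative Rc)‖ ≤ B := fun z hz => hz₅ hz
  have hB0 : 0 ≤ B := norm_nonneg _
  -- eventual conditions
  have hρ0 : 0 < ρ := lt_trans one_pos hρ
  have hrlt : ρ⁻¹ < 1 := inv_lt_one_of_one_lt₀ hρ
  have hr0 : 0 ≤ ρ⁻¹ := inv_nonneg.2 hρ0.le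
  have hcond1 : ∀ᶠ n : ℕ in atTop, S.natDegree < n := eventually_gt_atTop _
  have hcond2 : ∀ᶠ n : ℕ in atTop, 2 * A ≤ ρ ^ n * η := by
    have := (tendsto_pow_atTop_atTop_of_one_lt hρ).atTop_mul_const hη
    exact this.eventually_ge_atTop (2 * A)
  have hcond3 : ∀ᶠ n : ℕ in atTop,
      2 * δ * (A' + A * ((n : ℝ) + B / η)) < ρ ^ n * η := by
    have t1 : Tendsto (fun n : ℕ => (2 * δ * (A' + A * B / η)) * ρ⁻¹ ^ n
        + (2 * δ * A) * ((n : ℝ) * ρ⁻¹ ^ n)) atTop (nhds 0) := by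
      have a1 := (tendsto_pow_atTop_nhds_zero_of_lt_one hr0 hrlt).const_mul (2 * δ * (A' + A * B / η))
      have a2 := (tendsto_self_mul_const_pow_of_lt_one hr0 hrlt).const_mul (2 * δ * A)
      simpa using a1.add a2
    have t2 := t1.eventually_lt_const hη
    filter_upwards [t2] with n hn
    have hpow : (0:ℝ) < ρ ^ n := pow_pos hρ0 n
    have hprod : ρ⁻¹ ^ n * ρ ^ n = 1 := by
      rw [← mul_pow, inv_mul_cancel₀ hρ0.ne', one_pow]
    have key := mul_lt_mul_of_pos_right hn hpow
    rw [add_mul, mul_assoc (2 * δ * (A' + A * B / η)), hprod, mul_one,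
      mul_assoc (2 * δ * A), mul_assoc ((n:ℝ)), hprod, mul_one] at key
    have hexp : 2 * δ * (A' + A * ((n:ℝ) + B / η))
        = 2 * δ * (A' + A * B / η) + 2 * δ * A * (n:ℝ) := by ring
    rw [hexp, mul_comm (ρ ^ n) η]
    linarith [key]

  obtain ⟨N, hN⟩ := eventually_atTop.1 (hcond1.and (hcond2.and hcond3))
  refine ⟨N, fun n hn => ?_⟩
  obtain ⟨hn1, hn2, hn3⟩ := hN n hn
  exact roots_count_key R S hR θ m δ hδ Rc Sc hRc_def hSc_def hRc haev honly houtside hm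
    ρ η A A' B hρ hη hA0 hA'0 hB0 hρ_le hη_le hA_le hA'_le hB_le n hn1 hn2 hn3
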